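/- Let A ∈ Sym3 be positive definite, B = A⁻¹, a = det A, and let h ∈ ℝ³ be nonzero; set t = (hᵀAh)/a, u = Ah and α = hᵀAh. Define the linear map 𝒮 : Sym3 → Sym3 by 𝒮(X) = (2/a)[(uᵀXu) B + tr(XA) h hᵀ + α X − α tr(XA) B − 2 h (Xu)ᵀ − 2 (Xu) hᵀ]. Then 𝒮 is diagonalizable with real eigenvalues, and its eigenvalues, with multiplicity, are: −4t with multiplicity 1, 2t with multiplicity 2, and −2t with multiplicity 3. In particular the largest eigenvalue of 𝒮 is 2t = 2(hᵀAh)/det A, and the trace of 𝒮 as an endomorphism of Sym3 equals −6t. Explicit eigenvectors are h hᵀ (eigenvalue −4t); e fᵀ + f eᵀ and e eᵀ − f fᵀ (eigenvalue 2t); h eᵀ + e hᵀ, h fᵀ + f hᵀ and αB − h hᵀ (eigenvalue −2t), where e, f ∈ ℝ³ are nonzero vectors with eᵀAf = eᵀAh = fᵀAh = 0 and eᵀAe = fᵀAf. -/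

import Mathlib

open MeasureTheory Matrix Real Filter Topology Set Asymptotics

noncomputable section

/-- 3×3 real matrices; symmetric ones form `Sym3`, encoded via `Matrix.IsSymm`/`Matrix.PosDef`. -/
abbrev Mat3 := Matrix (Fin 3) (Fin 3) ℝ

/-- vectors in ℝ³ -/
abbrev Vec3 := Fin 3 → ℝ

/-- Euclidean norm on ℝ³. -/
def enorm3 (p : Vec3) : ℝ := Real.sqrt (∑ i, p i ^ 2)

/-- the quadratic form pᵀBp. -/
def quadForm (B : Mat3) (p : Vec3) : ℝ := p ⬝ᵥ B.mulVec p

/-- Ψ(B)_{ij} = 4π (det B)^{1/2} ∫ (pᵀBp)^{−1/2} p_i p_j f(p) dp. -/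
def PsiM (f : Vec3 → ℝ) (B : Mat3) : Mat3 :=
  Matrix.of fun i j =>
    (4 * π) * Real.sqrt B.det * ∫ p : Vec3, (Real.sqrt (quadForm B p))⁻¹ * (p i * p j * f p)

/-- χ_b(k)_{ij} = 4π (det b)^{1/2} ∫ (pᵀbp)^{−3/2} ((bp)ᵀ k (bp)) p_i p_j f(p) dp. -/
def chiM (f : Vec3 → ℝ) (b : Mat3) (k : Mat3) : Mat3 :=
  Matrix.of fun i j =>
    (4 * π) * Real.sqrt b.det *
      ∫ p : Vec3, ((Real.sqrt (quadForm b p))⁻¹ ^ 3) * (quadForm k (b.mulVec p) * (p i * p j * f p))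

/-- With u = ah, w = kh, α = hᵀah and b = a⁻¹:
M_a(k) = (2/det a)((hᵀkh) a + α k − 2(u wᵀ + w uᵀ) + tr(bk)(2 u uᵀ − α a)). -/
def MM (a : Mat3) (h : Vec3) (k : Mat3) : Mat3 :=
  (2 / a.det) • ((h ⬝ᵥ k.mulVec h) • a + (h ⬝ᵥ a.mulVec h) • k
    - (2:ℝ) • (vecMulVec (a.mulVec h) (k.mulVec h) + vecMulVec (k.mulVec h) (a.mulVec h))
    + (a⁻¹ * k).trace • ((2:ℝ) • vecMulVec (a.mulVec h) (a.mulVec h) - (h ⬝ᵥ a.mulVec h) • a))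

/-- The Fuchsian condition at B (with A = B⁻¹):
2Ψ(B) = A − (2/det A)((hᵀAh) A − 2 (Ah)(Ah)ᵀ). -/
def FuchsCond (f : Vec3 → ℝ) (h : Vec3) (B : Mat3) : Prop :=
  (2:ℝ) • PsiM f B =
    B⁻¹ - (2 / (B⁻¹).det) •
      ((h ⬝ᵥ (B⁻¹).mulVec h) • B⁻¹ - (2:ℝ) • vecMulVec ((B⁻¹).mulVec h) ((B⁻¹).mulVec h))

/-- F(B) = 16π ∫ (pᵀBp)^{1/2} f dp + 2 (det B)^{−1/2} + 4 (det B)^{1/2} hᵀB⁻¹h. -/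
def Ffun (f : Vec3 → ℝ) (h : Vec3) (B : Mat3) : ℝ :=
  16 * π * (∫ p : Vec3, Real.sqrt (quadForm B p) * f p)
    + 2 * (Real.sqrt B.det)⁻¹ + 4 * Real.sqrt B.det * (h ⬝ᵥ (B⁻¹).mulVec h)

/-- The magnetic operator 𝒮 on symmetric matrices: with a = det A, B = A⁻¹, u = Ah,
α = hᵀAh, 𝒮(X) = (2/a)[(uᵀXu) B + tr(XA) h hᵀ + α X − α tr(XA) B − 2 h (Xu)ᵀ − 2 (Xu) hᵀ]. -/
def SS (A : Mat3) (h : Vec3) (X : Mat3) : Mat3 :=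
  (2 / A.det) • ((A.mulVec h ⬝ᵥ X.mulVec (A.mulVec h)) • A⁻¹
    + (X * A).trace • vecMulVec h h
    + (h ⬝ᵥ A.mulVec h) • X
    - ((h ⬝ᵥ A.mulVec h) * (X * A).trace) • A⁻¹
    - (2:ℝ) • vecMulVec h (X.mulVec (A.mulVec h))
    - (2:ℝ) • vecMulVec (X.mulVec (A.mulVec h)) h)

/-! ### vecMulVec helper lemmas -/

lemma vmv_mulVec (x y z : Vec3) : (vecMulVec x y).mulVec z = (y ⬝ᵥ z) • x := by
  ext i
  simp [mulVec, vecMulVec_apply, dotProduct, Finset.mul_sum, mul_comm, mul_assoc, mul_left_comm]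

lemma trace_vmv_mul (x y : Vec3) (A : Mat3) : (vecMulVec x y * A).trace = y ⬝ᵥ A.mulVec x := by
  simp [trace, Matrix.mul_apply, vecMulVec_apply, dotProduct, mulVec, diag]
  rw [Finset.sum_comm]
  exact Finset.sum_congr rfl fun j _ => by
    rw [Finset.mul_sum]; exact Finset.sum_congr rfl fun i _ => by ring

lemma vmv_add_left (x y z : Vec3) : vecMulVec (x + y) z = vecMulVec x z + vecMulVec y z := by
  ext i j; simp [vecMulVec_apply]; ring

lemma vmv_add_right (x y z : Vec3) : vecMulVec x (y + z) = vecMulVec x y + vecMulVec x z := by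
  ext i j; simp [vecMulVec_apply]; ring

lemma vmv_smul_left (c : ℝ) (x y : Vec3) : vecMulVec (c • x) y = c • vecMulVec x y := by
  ext i j; simp [vecMulVec_apply]; ring

lemma vmv_smul_right (c : ℝ) (x y : Vec3) : vecMulVec x (c • y) = c • vecMulVec x y := by
  ext i j; simp [vecMulVec_apply]; ring

lemma vmv_zero_right (x : Vec3) : vecMulVec x (0 : Vec3) = 0 := by
  ext i j; simp [vecMulVec_apply]

lemma vmv_zero_left (x : Vec3) : vecMulVec (0 : Vec3) x = 0 := by
  ext i j; simp [vecMulVec_apply]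

lemma vmv_transpose (x y : Vec3) : (vecMulVec x y)ᵀ = vecMulVec y x := by
  ext i j; simp [vecMulVec_apply]; exact mul_comm _ _

/-! ### core facts about positive definite matrices -/

section core
variable {A : Mat3} {h e f : Vec3}

lemma hAT (hA : A.PosDef) : Aᵀ = A := by
  have := hA.1; ext i j; simpa using congrFun (congrFun this i) j

lemma symdot (hA : A.PosDef) (x y : Vec3) : x ⬝ᵥ A.mulVec y = y ⬝ᵥ A.mulVec x := by
  rw [Matrix.dotProduct_mulVec, ← Matrix.mulVec_transpose, hAT hA, dotProduct_comm]

lemma inv_mulVec_mulVec (hA : A.PosDef) (x : Vec3) : A⁻¹.mulVec (A.mulVec x) = x := by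
  rw [Matrix.mulVec_mulVec, Matrix.nonsing_inv_mul _ hA.det_pos.ne'.isUnit, Matrix.one_mulVec]

lemma posdef_quad (hA : A.PosDef) {x : Vec3} (hx : x ≠ 0) : 0 < x ⬝ᵥ A.mulVec x := by
  have := hA.dotProduct_mulVec_pos hx; simpa using this

/-! ### the six eigenvector equations -/

lemma eig1 (hA : A.PosDef) :
    SS A h (vecMulVec h h) = (-4 * ((h ⬝ᵥ A.mulVec h) / A.det)) • vecMulVec h h := by
  have ha := hA.det_pos.ne'
  rw [SS, vmv_mulVec, trace_vmv_mul, vmv_smul_right, vmv_smul_left,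
    dotProduct_smul, dotProduct_comm (A.mulVec h) h]
  match_scalars <;> field_simp <;> ring

lemma eig2 (hA : A.PosDef) (hef : e ⬝ᵥ A.mulVec f = 0)
    (heh : e ⬝ᵥ A.mulVec h = 0) (hfh : f ⬝ᵥ A.mulVec h = 0) :
    SS A h (vecMulVec e f + vecMulVec f e)
      = (2 * ((h ⬝ᵥ A.mulVec h) / A.det)) • (vecMulVec e f + vecMulVec f e) := by
  have ha := hA.det_pos.ne'
  have h1 : (vecMulVec e f + vecMulVec f e).mulVec (A.mulVec h) = 0 := by
    rw [Matrix.add_mulVec, vmv_mulVec, vmv_mulVec, hfh, heh]; simp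
  have h2 : ((vecMulVec e f + vecMulVec f e) * A).trace = 0 := by
    rw [add_mul, trace_add, trace_vmv_mul, trace_vmv_mul, symdot hA f e, hef]; simp
  rw [SS, h1, h2]
  simp only [dotProduct_zero, zero_smul, vmv_zero_right, vmv_zero_left, mul_zero, smul_zero]
  match_scalars <;> field_simp <;> ring

lemma eig3 (hA : A.PosDef) (heh : e ⬝ᵥ A.mulVec h = 0) (hfh : f ⬝ᵥ A.mulVec h = 0)
    (hee : e ⬝ᵥ A.mulVec e = f ⬝ᵥ A.mulVec f) :
    SS A h (vecMulVec e e - vecMulVec f f)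
      = (2 * ((h ⬝ᵥ A.mulVec h) / A.det)) • (vecMulVec e e - vecMulVec f f) := by
  have ha := hA.det_pos.ne'
  have h1 : (vecMulVec e e - vecMulVec f f).mulVec (A.mulVec h) = 0 := by
    rw [Matrix.sub_mulVec, vmv_mulVec, vmv_mulVec, heh, hfh]; simp
  have h2 : ((vecMulVec e e - vecMulVec f f) * A).trace = 0 := by
    rw [sub_mul, trace_sub, trace_vmv_mul, trace_vmv_mul, hee]; simp
  rw [SS, h1, h2]
  simp only [dotProduct_zero, zero_smul, vmv_zero_right, vmv_zero_left, mul_zero, smul_zero]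
  match_scalars <;> field_simp <;> ring

lemma eig4 (hA : A.PosDef) (heh : e ⬝ᵥ A.mulVec h = 0) :
    SS A h (vecMulVec h e + vecMulVec e h)
      = (-2 * ((h ⬝ᵥ A.mulVec h) / A.det)) • (vecMulVec h e + vecMulVec e h) := by
  have ha := hA.det_pos.ne'
  have h1 : (vecMulVec h e + vecMulVec e h).mulVec (A.mulVec h)
      = (h ⬝ᵥ A.mulVec h) • e := by
    rw [Matrix.add_mulVec, vmv_mulVec, vmv_mulVec, heh]; simp
  have h2 : ((vecMulVec h e + vecMulVec e h) * A).trace = 0 := by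
    rw [add_mul, trace_add, trace_vmv_mul, trace_vmv_mul, symdot hA h e, heh]; simp
  have h3 : A.mulVec h ⬝ᵥ e = 0 := by rw [dotProduct_comm]; exact heh
  rw [SS, h1, h2, dotProduct_smul, h3, vmv_smul_right, vmv_smul_left]
  match_scalars <;> field_simp <;> ring

lemma eig6 (hA : A.PosDef) :
    SS A h ((h ⬝ᵥ A.mulVec h) • A⁻¹ - vecMulVec h h)
      = (-2 * ((h ⬝ᵥ A.mulVec h) / A.det)) • ((h ⬝ᵥ A.mulVec h) • A⁻¹ - vecMulVec h h) := by
  have ha := hA.det_pos.ne'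
  have h1 : ((h ⬝ᵥ A.mulVec h) • A⁻¹ - vecMulVec h h).mulVec (A.mulVec h) = 0 := by
    rw [Matrix.sub_mulVec, Matrix.smul_mulVec, inv_mulVec_mulVec hA, vmv_mulVec]
    simp
  have h2 : (((h ⬝ᵥ A.mulVec h) • A⁻¹ - vecMulVec h h) * A).trace
      = 2 * (h ⬝ᵥ A.mulVec h) := by
    rw [sub_mul, Matrix.smul_mul, Matrix.nonsing_inv_mul _ hA.det_pos.ne'.isUnit,
      trace_sub, trace_smul, trace_one, trace_vmv_mul]
    simp; ring
  rw [SS, h1, h2]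
  simp only [dotProduct_zero, zero_smul, vmv_zero_right, vmv_zero_left, mul_zero, smul_zero]
  match_scalars <;> field_simp <;> ring

end core

/-! ### SS as a linear map -/

def SSL (A : Mat3) (h : Vec3) : Mat3 →ₗ[ℝ] Mat3 where
  toFun := SS A h
  map_add' X Y := by
    simp only [SS, Matrix.add_mulVec, dotProduct_add, add_mul, trace_add,
      vmv_add_right, vmv_add_left]
    module
  map_smul' c X := by
    simp only [SS, Matrix.smul_mulVec, dotProduct_smul, Matrix.smul_mul, trace_smul,
      vmv_smul_right, vmv_smul_left, smul_eq_mul, RingHom.id_apply]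
    module

/-! ### existence of the A-orthogonal pair -/

abbrev E3 := EuclideanSpace ℝ (Fin 3)

def toE (v : Vec3) : E3 := (WithLp.equiv 2 (Fin 3 → ℝ)).symm v

lemma dot_eq_inner (x y : Vec3) : x ⬝ᵥ y = (inner ℝ (toE x) (toE y) : ℝ) := by
  simp [PiLp.inner_apply, RCLike.inner_apply, toE, dotProduct, mul_comm]

lemma exists_pair (v : Vec3) (hv : v ≠ 0) :
    ∃ e f : Vec3, e ≠ 0 ∧ f ≠ 0 ∧ e ⬝ᵥ f = 0 ∧ e ⬝ᵥ v = 0 ∧ f ⬝ᵥ v = 0 ∧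
      e ⬝ᵥ e = 1 ∧ f ⬝ᵥ f = 1 := by
  classical
  have hv' : toE v ≠ 0 := by
    intro h0; exact hv (by simpa [toE] using congrArg (WithLp.equiv 2 (Fin 3 → ℝ)) h0)
  set V : Submodule ℝ E3 := (ℝ ∙ (toE v))ᗮ with hV
  have hfr : Module.finrank ℝ V = 2 := by
    haveI : Fact (Module.finrank ℝ E3 = 2 + 1) := ⟨by simp⟩
    simpa using Submodule.finrank_orthogonal_span_singleton (𝕜 := ℝ) (E := E3) hv'
  let b : OrthonormalBasis (Fin 2) ℝ V := (stdOrthonormalBasis ℝ V).reindex (finCongr hfr)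
  let ev : Fin 2 → Vec3 := fun i => WithLp.equiv 2 (Fin 3 → ℝ) (b i : E3)
  have hto : ∀ i, toE (ev i) = (b i : E3) := fun i => rfl
  have hmem : ∀ i, ev i ⬝ᵥ v = 0 := by
    intro i
    rw [dot_eq_inner, hto]
    have h0 : (inner ℝ (toE v) ((b i : E3)) : ℝ) = 0 :=
      Submodule.inner_right_of_mem_orthogonal (Submodule.mem_span_singleton_self (toE v)) (b i).2
    rw [real_inner_comm] at h0; exact h0
  have hne : ∀ i, ev i ≠ 0 := by
    intro i hi
    have hbi : (b i : V) ≠ 0 := b.orthonormal.ne_zero i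
    apply hbi
    have h2 : (b i : E3) = 0 := by rw [← hto i, hi]; rfl
    exact Subtype.coe_injective (by simpa using h2)
  have hself : ∀ i, ev i ⬝ᵥ ev i = 1 := by
    intro i
    rw [dot_eq_inner, hto, ← Submodule.coe_inner, real_inner_self_eq_norm_sq,
      b.orthonormal.1 i]
    norm_num
  refine ⟨ev 0, ev 1, hne 0, hne 1, ?_, hmem 0, hmem 1, hself 0, hself 1⟩
  rw [dot_eq_inner, hto, hto, ← Submodule.coe_inner]
  exact b.orthonormal.2 (by decide : (0 : Fin 2) ≠ 1)

open scoped MatrixOrder in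
lemma exists_ef {A : Mat3} {h : Vec3} (hA : A.PosDef) (hh : h ≠ 0) :
    ∃ e f : Vec3, e ≠ 0 ∧ f ≠ 0 ∧ e ⬝ᵥ A.mulVec f = 0 ∧ e ⬝ᵥ A.mulVec h = 0 ∧
      f ⬝ᵥ A.mulVec h = 0 ∧ e ⬝ᵥ A.mulVec e = f ⬝ᵥ A.mulVec f := by
  classical
  set S := CFC.sqrt A with hS
  have hSS : S * S = A := CFC.sqrt_mul_sqrt_self A hA.posSemidef.nonneg
  have hST : Sᵀ = S := by
    have := (CFC.sqrt_nonneg A).posSemidef.1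
    ext i j; simpa using congrFun (congrFun this i) j
  have hdS : S.det ≠ 0 := by
    intro h0
    have : A.det = 0 := by rw [← hSS, det_mul, h0, mul_zero]
    exact hA.det_pos.ne' this
  have hSinv : ∀ x : Vec3, S⁻¹.mulVec (S.mulVec x) = x := fun x => by
    rw [Matrix.mulVec_mulVec, Matrix.nonsing_inv_mul _ hdS.isUnit, Matrix.one_mulVec]
  have hSinv' : ∀ x : Vec3, S.mulVec (S⁻¹.mulVec x) = x := fun x => by
    rw [Matrix.mulVec_mulVec, Matrix.mul_nonsing_inv _ hdS.isUnit, Matrix.one_mulVec]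
  have key : ∀ x y : Vec3, x ⬝ᵥ A.mulVec y = S.mulVec x ⬝ᵥ S.mulVec y := by
    intro x y
    rw [← hSS, ← Matrix.mulVec_mulVec, Matrix.dotProduct_mulVec x S, ← Matrix.mulVec_transpose,
      hST]
  have hv : S.mulVec h ≠ 0 := by
    intro h0; apply hh; rw [← hSinv h, h0, Matrix.mulVec_zero]
  obtain ⟨e', f', he', hf', hef, heh, hfh, hee, hff⟩ := exists_pair (S.mulVec h) hv
  refine ⟨S⁻¹.mulVec e', S⁻¹.mulVec f', ?_, ?_, ?_, ?_, ?_, ?_⟩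
  · intro h0; apply he'; rw [← hSinv' e', h0, Matrix.mulVec_zero]
  · intro h0; apply hf'; rw [← hSinv' f', h0, Matrix.mulVec_zero]
  · rw [key, hSinv', hSinv']; exact hef
  · rw [key, hSinv']; exact heh
  · rw [key, hSinv']; exact hfh
  · rw [key, hSinv', key, hSinv', hee, hff]

/-! ### bilinear evaluation functional -/

lemma vec6_zero {α : Type*} (a b c d e f : α) : ![a,b,c,d,e,f] 0 = a := rfl
lemma vec6_one {α : Type*} (a b c d e f : α) : ![a,b,c,d,e,f] 1 = b := rfl
lemma vec6_two {α : Type*} (a b c d e f : α) : ![a,b,c,d,e,f] 2 = c := rfl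
lemma vec6_three {α : Type*} (a b c d e f : α) : ![a,b,c,d,e,f] 3 = d := rfl
lemma vec6_four {α : Type*} (a b c d e f : α) : ![a,b,c,d,e,f] 4 = e := rfl
lemma vec6_five {α : Type*} (a b c d e f : α) : ![a,b,c,d,e,f] 5 = f := rfl

def evb (v w : Vec3) : Mat3 →ₗ[ℝ] ℝ where
  toFun Y := v ⬝ᵥ Y.mulVec w
  map_add' X Y := by simp [Matrix.add_mulVec, dotProduct_add]
  map_smul' c X := by simp [Matrix.smul_mulVec, dotProduct_smul]

lemma evb_apply (v w : Vec3) (Y : Mat3) : evb v w Y = v ⬝ᵥ Y.mulVec w := rfl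

lemma evb_vmv (v w x y : Vec3) : evb v w (vecMulVec x y) = (v ⬝ᵥ x) * (y ⬝ᵥ w) := by
  rw [evb_apply, vmv_mulVec, dotProduct_smul, smul_eq_mul, mul_comm]

lemma evb_inv {A : Mat3} (hA : A.PosDef) (x y : Vec3) :
    evb (A.mulVec x) (A.mulVec y) A⁻¹ = x ⬝ᵥ A.mulVec y := by
  rw [evb_apply, inv_mulVec_mulVec hA, dotProduct_comm, symdot hA]

/-! ### linear independence of the eigenbasis -/

section indep
variable {A : Mat3} {h e f : Vec3}

lemma indep_XX (hA : A.PosDef) (hh : h ≠ 0) (he : e ≠ 0) (hf : f ≠ 0)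
    (hef : e ⬝ᵥ A.mulVec f = 0) (heh : e ⬝ᵥ A.mulVec h = 0) (hfh : f ⬝ᵥ A.mulVec h = 0)
    (heef : e ⬝ᵥ A.mulVec e = f ⬝ᵥ A.mulVec f) :
    LinearIndependent ℝ
      ![vecMulVec h h, vecMulVec e f + vecMulVec f e, vecMulVec e e - vecMulVec f f,
        vecMulVec h e + vecMulVec e h, vecMulVec h f + vecMulVec f h,
        (h ⬝ᵥ A.mulVec h) • A⁻¹ - vecMulVec h h] := by
  have hα : 0 < h ⬝ᵥ A.mulVec h := posdef_quad hA hh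
  have hβ : 0 < e ⬝ᵥ A.mulVec e := posdef_quad hA he
  have hfe : f ⬝ᵥ A.mulVec e = 0 := by rw [symdot hA]; exact hef
  have hhe : h ⬝ᵥ A.mulVec e = 0 := by rw [symdot hA]; exact heh
  have hhf : h ⬝ᵥ A.mulVec f = 0 := by rw [symdot hA]; exact hfh
  have dcomm : ∀ b x : Vec3, A.mulVec b ⬝ᵥ x = x ⬝ᵥ A.mulVec b := fun _ _ =>
    dotProduct_comm _ _
  rw [Fintype.linearIndependent_iff]
  intro g hg
  have key : ∀ v w : Vec3, ∑ i : Fin 6, g i * evb v w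
      (![vecMulVec h h, vecMulVec e f + vecMulVec f e, vecMulVec e e - vecMulVec f f,
        vecMulVec h e + vecMulVec e h, vecMulVec h f + vecMulVec f h,
        (h ⬝ᵥ A.mulVec h) • A⁻¹ - vecMulVec h h] i) = 0 := by
    intro v w
    have h0 := congrArg (evb v w) hg
    rw [map_sum] at h0
    simpa using h0
  have E1 := key (A.mulVec h) (A.mulVec h)
  have E2 := key (A.mulVec h) (A.mulVec e)
  have E3 := key (A.mulVec h) (A.mulVec f)
  have E4 := key (A.mulVec e) (A.mulVec f)
  have E5 := key (A.mulVec e) (A.mulVec e)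
  have E6 := key (A.mulVec f) (A.mulVec f)
  simp only [Fin.sum_univ_six, vec6_zero, vec6_one, vec6_two, vec6_three, vec6_four,
    vec6_five, map_add, map_sub, _root_.map_smul, evb_vmv, evb_inv hA,
    dcomm, hef, hfe, heh, hhe, hfh, hhf, heef, smul_eq_mul, mul_zero, zero_mul, add_zero,
    zero_add, sub_zero, zero_sub, sub_self, neg_zero, mul_neg] at E1 E2 E3 E4 E5 E6
  have hβ' : 0 < f ⬝ᵥ A.mulVec f := heef ▸ hβ
  have hg0 : g 0 = 0 := (mul_eq_zero.mp E1).resolve_right (mul_ne_zero hα.ne' hα.ne')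
  have hg3 : g 3 = 0 := (mul_eq_zero.mp E2).resolve_right (mul_ne_zero hα.ne' hβ'.ne')
  have hg4 : g 4 = 0 := (mul_eq_zero.mp E3).resolve_right (mul_ne_zero hα.ne' hβ'.ne')
  have hg1 : g 1 = 0 := (mul_eq_zero.mp E4).resolve_right (mul_ne_zero hβ'.ne' hβ'.ne')
  have hE5 : g 5 * (h ⬝ᵥ A.mulVec h * (f ⬝ᵥ A.mulVec f)) = 0 := by linarith [E5, E6]
  have hg5 : g 5 = 0 := (mul_eq_zero.mp hE5).resolve_right (mul_ne_zero hα.ne' hβ'.ne')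
  have hg2 : g 2 = 0 := by
    rw [hg5, zero_mul, add_zero] at E5
    exact (mul_eq_zero.mp E5).resolve_right (mul_ne_zero hβ'.ne' hβ'.ne')
  intro i
  fin_cases i
  exacts [hg0, hg1, hg2, hg3, hg4, hg5]
end indep

/-! ### the symmetric matrices -/

def MsymM : Submodule ℝ Mat3 where
  carrier := {Y | Y.IsSymm}
  add_mem' := by intro a b ha hb; exact Matrix.IsSymm.add ha hb
  zero_mem' := by simp [Matrix.IsSymm]
  smul_mem' := by intro c Y hY; exact Matrix.IsSymm.smul hY c

lemma mem_MsymM {Y : Mat3} : Y ∈ MsymM ↔ Y.IsSymm := Iff.rfl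

def stdSym : Fin 6 → Mat3 :=
  ![single 0 0 1, single 1 1 1, single 2 2 1,
    single 0 1 1 + single 1 0 1,
    single 0 2 1 + single 2 0 1,
    single 1 2 1 + single 2 1 1]

lemma sym_mem_span_stdSym (Y : Mat3) (hY : Y.IsSymm) :
    Y ∈ Submodule.span ℝ (Set.range stdSym) := by
  rw [Submodule.mem_span_range_iff_exists_fun]
  refine ⟨![Y 0 0, Y 1 1, Y 2 2, Y 0 1, Y 0 2, Y 1 2], ?_⟩
  have s01 : Y 1 0 = Y 0 1 := congrFun (congrFun hY 0) 1
  have s02 : Y 2 0 = Y 0 2 := congrFun (congrFun hY 0) 2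
  have s12 : Y 2 1 = Y 1 2 := congrFun (congrFun hY 1) 2
  rw [Fin.sum_univ_six]
  simp only [stdSym, vec6_zero, vec6_one, vec6_two, vec6_three, vec6_four, vec6_five]
  ext i j
  fin_cases i <;> fin_cases j <;>
    simp [Matrix.single, s01, s02, s12]

lemma symXX {A : Mat3} {h e f : Vec3} (hA : A.PosDef) :
    ∀ n, (![vecMulVec h h, vecMulVec e f + vecMulVec f e, vecMulVec e e - vecMulVec f f,
        vecMulVec h e + vecMulVec e h, vecMulVec h f + vecMulVec f h,
        (h ⬝ᵥ A.mulVec h) • A⁻¹ - vecMulVec h h] n).IsSymm := by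
  have hinvsym : (A⁻¹)ᵀ = A⁻¹ := by rw [Matrix.transpose_nonsing_inv, hAT hA]
  have s0 : (vecMulVec h h).IsSymm := vmv_transpose h h
  have s1 : (vecMulVec e f + vecMulVec f e).IsSymm := by
    rw [Matrix.IsSymm, Matrix.transpose_add, vmv_transpose, vmv_transpose, add_comm]
  have s2 : (vecMulVec e e - vecMulVec f f).IsSymm := by
    rw [Matrix.IsSymm, Matrix.transpose_sub, vmv_transpose, vmv_transpose]
  have s3 : (vecMulVec h e + vecMulVec e h).IsSymm := by
    rw [Matrix.IsSymm, Matrix.transpose_add, vmv_transpose, vmv_transpose, add_comm]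
  have s4 : (vecMulVec h f + vecMulVec f h).IsSymm := by
    rw [Matrix.IsSymm, Matrix.transpose_add, vmv_transpose, vmv_transpose, add_comm]
  have s5 : ((h ⬝ᵥ A.mulVec h) • A⁻¹ - vecMulVec h h).IsSymm := by
    rw [Matrix.IsSymm, Matrix.transpose_sub, Matrix.transpose_smul, hinvsym, vmv_transpose]
  intro n
  fin_cases n
  exacts [s0, s1, s2, s3, s4, s5]

lemma span_XX_eq {A : Mat3} {h e f : Vec3} (hA : A.PosDef) (hh : h ≠ 0) (he : e ≠ 0)
    (hf : f ≠ 0) (hef : e ⬝ᵥ A.mulVec f = 0) (heh : e ⬝ᵥ A.mulVec h = 0)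
    (hfh : f ⬝ᵥ A.mulVec h = 0) (heef : e ⬝ᵥ A.mulVec e = f ⬝ᵥ A.mulVec f) :
    Submodule.span ℝ (Set.range
      ![vecMulVec h h, vecMulVec e f + vecMulVec f e, vecMulVec e e - vecMulVec f f,
        vecMulVec h e + vecMulVec e h, vecMulVec h f + vecMulVec f h,
        (h ⬝ᵥ A.mulVec h) • A⁻¹ - vecMulVec h h]) = MsymM := by
  have h1 : Submodule.span ℝ (Set.range
      ![vecMulVec h h, vecMulVec e f + vecMulVec f e, vecMulVec e e - vecMulVec f f,
        vecMulVec h e + vecMulVec e h, vecMulVec h f + vecMulVec f h,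
        (h ⬝ᵥ A.mulVec h) • A⁻¹ - vecMulVec h h]) ≤ MsymM := by
    rw [Submodule.span_le]
    rintro _ ⟨i, rfl⟩
    exact symXX hA i
  have h2 : MsymM ≤ Submodule.span ℝ (Set.range stdSym) := fun Y hY =>
    sym_mem_span_stdSym Y hY
  refine Submodule.eq_of_le_of_finrank_le h1 ?_
  have hf2 : Module.finrank ℝ MsymM ≤ 6 := by
    refine le_trans (Submodule.finrank_mono h2) ?_
    simpa [Set.finrank] using finrank_range_le_card (R := ℝ) stdSym
  rw [finrank_span_eq_card (indep_XX hA hh he hf hef heh hfh heef)]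
  simpa using hf2


/-- 𝒮 is diagonalizable on Sym3 with real eigenvalues −4t (multiplicity 1),
2t (multiplicity 2), −2t (multiplicity 3), where t = (hᵀAh)/det A; the largest eigenvalue
is 2t, the trace is −6t, and explicit eigenvectors are as listed. -/
theorem magnetic_tensor_eigenvalues (A : Mat3) (h : Vec3) (hA : A.PosDef) (hh : h ≠ 0) :
    -- diagonalizability with multiplicities: an eigenbasis of Sym3 with eigenvalue list
    -- (−4t, 2t, 2t, −2t, −2t, −2t), whose sum (the trace of 𝒮 on Sym3) is −6t
    (∃ X : Fin 6 → Mat3, (∀ n, (X n).IsSymm) ∧ LinearIndependent ℝ X ∧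
      (∀ Y : Mat3, Y.IsSymm → Y ∈ Submodule.span ℝ (Set.range X)) ∧
      (∀ n, SS A h (X n) =
        (![-4 * ((h ⬝ᵥ A.mulVec h) / A.det), 2 * ((h ⬝ᵥ A.mulVec h) / A.det),
           2 * ((h ⬝ᵥ A.mulVec h) / A.det), -2 * ((h ⬝ᵥ A.mulVec h) / A.det),
           -2 * ((h ⬝ᵥ A.mulVec h) / A.det), -2 * ((h ⬝ᵥ A.mulVec h) / A.det)] n) • X n) ∧
      (∑ n : Fin 6,
        ![-4 * ((h ⬝ᵥ A.mulVec h) / A.det), 2 * ((h ⬝ᵥ A.mulVec h) / A.det),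
          2 * ((h ⬝ᵥ A.mulVec h) / A.det), -2 * ((h ⬝ᵥ A.mulVec h) / A.det),
          -2 * ((h ⬝ᵥ A.mulVec h) / A.det), -2 * ((h ⬝ᵥ A.mulVec h) / A.det)] n
        = -6 * ((h ⬝ᵥ A.mulVec h) / A.det))) ∧
    -- every eigenvalue is −4t, 2t or −2t; in particular all are ≤ 2t
    (∀ (μ : ℝ) (X : Mat3), X.IsSymm → X ≠ 0 → SS A h X = μ • X →
      (μ = -4 * ((h ⬝ᵥ A.mulVec h) / A.det) ∨ μ = 2 * ((h ⬝ᵥ A.mulVec h) / A.det) ∨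
        μ = -2 * ((h ⬝ᵥ A.mulVec h) / A.det)) ∧ μ ≤ 2 * ((h ⬝ᵥ A.mulVec h) / A.det)) ∧
    -- explicit eigenvectors, for any admissible pair e, f
    (∀ e f : Vec3, e ≠ 0 → f ≠ 0 →
      e ⬝ᵥ A.mulVec f = 0 → e ⬝ᵥ A.mulVec h = 0 → f ⬝ᵥ A.mulVec h = 0 →
      e ⬝ᵥ A.mulVec e = f ⬝ᵥ A.mulVec f →
      SS A h (vecMulVec h h) = (-4 * ((h ⬝ᵥ A.mulVec h) / A.det)) • vecMulVec h h ∧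
      SS A h (vecMulVec e f + vecMulVec f e)
        = (2 * ((h ⬝ᵥ A.mulVec h) / A.det)) • (vecMulVec e f + vecMulVec f e) ∧
      SS A h (vecMulVec e e - vecMulVec f f)
        = (2 * ((h ⬝ᵥ A.mulVec h) / A.det)) • (vecMulVec e e - vecMulVec f f) ∧
      SS A h (vecMulVec h e + vecMulVec e h)
        = (-2 * ((h ⬝ᵥ A.mulVec h) / A.det)) • (vecMulVec h e + vecMulVec e h) ∧
      SS A h (vecMulVec h f + vecMulVec f h)
        = (-2 * ((h ⬝ᵥ A.mulVec h) / A.det)) • (vecMulVec h f + vecMulVec f h) ∧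
      SS A h ((h ⬝ᵥ A.mulVec h) • A⁻¹ - vecMulVec h h)
        = (-2 * ((h ⬝ᵥ A.mulVec h) / A.det)) • ((h ⬝ᵥ A.mulVec h) • A⁻¹ - vecMulVec h h)) := by
  obtain ⟨e, f, he, hf, hef, heh, hfh, heef⟩ := exists_ef hA hh
  have ha : (0:ℝ) < A.det := hA.det_pos
  have hα : 0 < h ⬝ᵥ A.mulVec h := posdef_quad hA hh
  have ht : 0 < (h ⬝ᵥ A.mulVec h) / A.det := div_pos hα ha
  have hind := indep_XX hA hh he hf hef heh hfh heef
  have hspan := span_XX_eq hA hh he hf hef heh hfh heef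
  have eigAll : ∀ n, SS A h
      (![vecMulVec h h, vecMulVec e f + vecMulVec f e, vecMulVec e e - vecMulVec f f,
         vecMulVec h e + vecMulVec e h, vecMulVec h f + vecMulVec f h,
         (h ⬝ᵥ A.mulVec h) • A⁻¹ - vecMulVec h h] n) =
      (![-4 * ((h ⬝ᵥ A.mulVec h) / A.det), 2 * ((h ⬝ᵥ A.mulVec h) / A.det),
         2 * ((h ⬝ᵥ A.mulVec h) / A.det), -2 * ((h ⬝ᵥ A.mulVec h) / A.det),
         -2 * ((h ⬝ᵥ A.mulVec h) / A.det), -2 * ((h ⬝ᵥ A.mulVec h) / A.det)] n) •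
      (![vecMulVec h h, vecMulVec e f + vecMulVec f e, vecMulVec e e - vecMulVec f f,
         vecMulVec h e + vecMulVec e h, vecMulVec h f + vecMulVec f h,
         (h ⬝ᵥ A.mulVec h) • A⁻¹ - vecMulVec h h] n) := by
    intro n
    fin_cases n
    exacts [eig1 hA, eig2 hA hef heh hfh, eig3 hA heh hfh heef, eig4 hA heh, eig4 hA hfh,
      eig6 hA]
  refine ⟨⟨_, symXX hA, hind, ?_, eigAll, ?_⟩, ?_, ?_⟩
  · intro Y hY
    rw [hspan]
    exact hY
  · rw [Fin.sum_univ_six]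
    simp only [vec6_zero, vec6_one, vec6_two, vec6_three, vec6_four, vec6_five]
    ring
  · -- classification of eigenvalues
    intro μ X hXs hX0 hSX
    have hXmem : X ∈ Submodule.span ℝ (Set.range
        ![vecMulVec h h, vecMulVec e f + vecMulVec f e, vecMulVec e e - vecMulVec f f,
          vecMulVec h e + vecMulVec e h, vecMulVec h f + vecMulVec f h,
          (h ⬝ᵥ A.mulVec h) • A⁻¹ - vecMulVec h h]) := by rw [hspan]; exact hXs
    rw [Submodule.mem_span_range_iff_exists_fun] at hXmem
    obtain ⟨c, hc⟩ := hXmem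
    have h1 : SS A h X = ∑ i : Fin 6,
        (c i * (![-4 * ((h ⬝ᵥ A.mulVec h) / A.det), 2 * ((h ⬝ᵥ A.mulVec h) / A.det),
           2 * ((h ⬝ᵥ A.mulVec h) / A.det), -2 * ((h ⬝ᵥ A.mulVec h) / A.det),
           -2 * ((h ⬝ᵥ A.mulVec h) / A.det), -2 * ((h ⬝ᵥ A.mulVec h) / A.det)] i)) •
        (![vecMulVec h h, vecMulVec e f + vecMulVec f e, vecMulVec e e - vecMulVec f f,
          vecMulVec h e + vecMulVec e h, vecMulVec h f + vecMulVec f h,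
          (h ⬝ᵥ A.mulVec h) • A⁻¹ - vecMulVec h h] i) := by
      rw [← hc]
      show SSL A h _ = _
      rw [map_sum]
      refine Finset.sum_congr rfl fun i _ => ?_
      rw [_root_.map_smul]
      show c i • SS A h _ = _
      rw [eigAll i, smul_smul]
    have h2 : μ • X = ∑ i : Fin 6, (μ * c i) •
        (![vecMulVec h h, vecMulVec e f + vecMulVec f e, vecMulVec e e - vecMulVec f f,
          vecMulVec h e + vecMulVec e h, vecMulVec h f + vecMulVec f h,
          (h ⬝ᵥ A.mulVec h) • A⁻¹ - vecMulVec h h] i) := by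
      rw [← hc, Finset.smul_sum]
      exact Finset.sum_congr rfl fun i _ => by rw [smul_smul]
    have h3 : ∑ i : Fin 6,
        ((c i * (![-4 * ((h ⬝ᵥ A.mulVec h) / A.det), 2 * ((h ⬝ᵥ A.mulVec h) / A.det),
           2 * ((h ⬝ᵥ A.mulVec h) / A.det), -2 * ((h ⬝ᵥ A.mulVec h) / A.det),
           -2 * ((h ⬝ᵥ A.mulVec h) / A.det), -2 * ((h ⬝ᵥ A.mulVec h) / A.det)] i)) - μ * c i) •
        (![vecMulVec h h, vecMulVec e f + vecMulVec f e, vecMulVec e e - vecMulVec f f,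
          vecMulVec h e + vecMulVec e h, vecMulVec h f + vecMulVec f h,
          (h ⬝ᵥ A.mulVec h) • A⁻¹ - vecMulVec h h] i) = 0 := by
      have := hSX
      rw [h1, h2] at this
      rw [← sub_eq_zero] at this
      rw [← this, ← Finset.sum_sub_distrib]
      exact Finset.sum_congr rfl fun i _ => by rw [sub_smul]
    have hci := Fintype.linearIndependent_iff.mp hind _ h3
    have hex : ∃ i, c i ≠ 0 := by
      by_contra hall
      push_neg at hall
      apply hX0
      rw [← hc]
      simp [hall]
    obtain ⟨i, hi⟩ := hex
    have h4 : c i * ((![-4 * ((h ⬝ᵥ A.mulVec h) / A.det), 2 * ((h ⬝ᵥ A.mulVec h) / A.det),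
           2 * ((h ⬝ᵥ A.mulVec h) / A.det), -2 * ((h ⬝ᵥ A.mulVec h) / A.det),
           -2 * ((h ⬝ᵥ A.mulVec h) / A.det), -2 * ((h ⬝ᵥ A.mulVec h) / A.det)] i) - μ) = 0 := by
      have := hci i
      ring_nf
      ring_nf at this
      linarith [this]
    have h5 : μ = ![-4 * ((h ⬝ᵥ A.mulVec h) / A.det), 2 * ((h ⬝ᵥ A.mulVec h) / A.det),
           2 * ((h ⬝ᵥ A.mulVec h) / A.det), -2 * ((h ⬝ᵥ A.mulVec h) / A.det),
           -2 * ((h ⬝ᵥ A.mulVec h) / A.det), -2 * ((h ⬝ᵥ A.mulVec h) / A.det)] i := by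
      have := (mul_eq_zero.mp h4).resolve_left hi
      linarith [this]
    have h6 : μ = -4 * ((h ⬝ᵥ A.mulVec h) / A.det) ∨ μ = 2 * ((h ⬝ᵥ A.mulVec h) / A.det) ∨
        μ = -2 * ((h ⬝ᵥ A.mulVec h) / A.det) := by
      fin_cases i
      exacts [Or.inl h5, Or.inr (Or.inl h5), Or.inr (Or.inl h5), Or.inr (Or.inr h5),
        Or.inr (Or.inr h5), Or.inr (Or.inr h5)]
    refine ⟨h6, ?_⟩
    rcases h6 with h6 | h6 | h6 <;> rw [h6] <;> linarith
  · -- explicit eigenvectors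
    intro e' f' he' hf' hef' heh' hfh' heef'
    exact ⟨eig1 hA, eig2 hA hef' heh' hfh', eig3 hA heh' hfh' heef', eig4 hA heh',
      eig4 hA hfh', eig6 hA⟩
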